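/- If H is a proper subgraph of a connected r-regular graph G of order n and diameter D, then μ(G) − μ(H) > 1/(n(D+1)), where μ denotes the largest adjacency eigenvalue (so μ(G) = r). -/

import Mathlib

open Classical in
noncomputable def adjMat {V : Type*} [Fintype V] (G : SimpleGraph V) :
    Matrix V V ℝ :=
  Matrix.of fun i j => if G.Adj i j then 1 else 0

def IsAdjEigenvalue {V : Type*} [Fintype V] (A : Matrix V V ℝ) (μ : ℝ) : Prop :=
  ∃ x : V → ℝ, x ≠ 0 ∧ A.mulVec x = μ • x

def IsMaxAdjEigenvalue {V : Type*} [Fintype V] (A : Matrix V V ℝ) (μ : ℝ) : Prop :=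
  IsAdjEigenvalue A μ ∧ ∀ ν, IsAdjEigenvalue A ν → ν ≤ μ

def IsMinAdjEigenvalue {V : Type*} [Fintype V] (A : Matrix V V ℝ) (μ : ℝ) : Prop :=
  IsAdjEigenvalue A μ ∧ ∀ ν, IsAdjEigenvalue A ν → μ ≤ ν

open Finset SimpleGraph

section aux

variable {V : Type*}

lemma aux_getVert_mem_support {G : SimpleGraph V} {u v : V} (p : G.Walk u v) (i : ℕ) :
    p.getVert i ∈ p.support := by
  induction p generalizing i with
  | nil => cases i <;> simp [SimpleGraph.Walk.getVert]
  | cons h q ih =>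
    cases i with
    | zero => simp [SimpleGraph.Walk.getVert]
    | succ i => simpa [SimpleGraph.Walk.getVert] using Or.inr (ih i)

lemma aux_getVert_inj {G : SimpleGraph V} {u v : V} {p : G.Walk u v} (hp : p.IsPath)
    {i j : ℕ} (hi : i ≤ p.length) (hj : j ≤ p.length)
    (h : p.getVert i = p.getVert j) : i = j := by
  induction p generalizing i j with
  | nil => simp only [SimpleGraph.Walk.length_nil] at hi hj; omega
  | cons hadj q ih =>
    rw [SimpleGraph.Walk.cons_isPath_iff] at hp
    cases i with
    | zero =>
      cases j with
      | zero => rfl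
      | succ j =>
        exfalso
        apply hp.2
        have h' : _ = q.getVert j := h
        have := aux_getVert_mem_support q j
        rwa [← h'] at this
    | succ i =>
      cases j with
      | zero =>
        exfalso
        apply hp.2
        have h' : q.getVert i = _ := h
        have := aux_getVert_mem_support q i
        rwa [h'] at this
      | succ j =>
        have := ih hp.1 (by simpa using hi) (by simpa using hj) h
        omega

end aux

set_option maxHeartbeats 2000000 in
theorem stmt11 {n r : ℕ} (G : SimpleGraph (Fin n)) (hG : G.Connected)
    [DecidableRel G.Adj] (hreg : G.IsRegularOfDegree r)
    (D : ℕ) (hD1 : ∀ u v, G.dist u v ≤ D) (hD2 : ∃ u v, G.dist u v = D)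
    (H : SimpleGraph (Fin n)) (hHG : H ≤ G) (hne : H ≠ G)
    (μG μH : ℝ) (hmaxG : IsMaxAdjEigenvalue (adjMat G) μG)
    (hmaxH : IsMaxAdjEigenvalue (adjMat H) μH) :
    μG - μH > 1 / (n * (D + 1)) := by
  classical
  -- a missing edge
  have hnotle : ¬ ∀ ⦃v w : Fin n⦄, G.Adj v w → H.Adj v w :=
    fun h => hne (le_antisymm hHG h)
  push_neg at hnotle
  obtain ⟨a, b, hab, hnab⟩ := hnotle
  have hba : G.Adj b a := hab.symm
  have hnba : ¬ H.Adj b a := fun h => hnab h.symm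
  have habne : a ≠ b := G.ne_of_adj hab
  -- basic numerics
  have hn1 : 1 ≤ n := a.pos
  have hD : 1 ≤ D := by
    have h1 : G.dist a b = 1 := SimpleGraph.dist_eq_one_iff_adj.mpr hab
    have := hD1 a b
    omega
  have hDpos : (0:ℝ) < D := by exact_mod_cast hD
  have hnpos : (0:ℝ) < n := by exact_mod_cast hn1
  -- row sums of adjMat G are r
  have hrow : ∀ i : Fin n, ∑ j, adjMat G i j = (r : ℝ) := by
    intro i
    have h1 : ∑ j, adjMat G i j = ∑ j, (if G.Adj i j then (1:ℝ) else 0) := by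
      apply Finset.sum_congr rfl; intro j _; simp [adjMat]
    rw [h1, Finset.sum_boole]
    have h2 : (univ.filter (fun j => G.Adj i j)) = G.neighborFinset i := by
      ext j; simp [SimpleGraph.mem_neighborFinset]
    rw [h2, SimpleGraph.card_neighborFinset_eq_degree, hreg i]
  -- μG ≥ r using the all-ones vector
  have hμGr : (r : ℝ) ≤ μG := by
    apply hmaxG.2
    refine ⟨fun _ => 1, ?_, ?_⟩
    · intro h
      have := congrFun h ⟨0, by omega⟩
      simp at this
    · funext i
      simp only [Matrix.mulVec, dotProduct, Pi.smul_apply, smul_eq_mul, mul_one]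
      simpa using hrow i
  -- eigenvector for μH
  obtain ⟨x, hx0, hxe⟩ := hmaxH.1
  set y : Fin n → ℝ := fun i => |x i| with hy
  have hy0 : ∀ i, 0 ≤ y i := fun i => abs_nonneg _
  set S : ℝ := ∑ i, x i ^ 2 with hS
  have hSy : S = ∑ i, y i ^ 2 := by simp [hy, sq_abs, hS]
  have hSpos : 0 < S := by
    obtain ⟨i0, hi0⟩ := Function.ne_iff.mp hx0
    have h1 : (0:ℝ) < x i0 ^ 2 := pow_two_pos_of_ne_zero hi0
    have h2 : x i0 ^ 2 ≤ S := Finset.single_le_sum (fun i _ => sq_nonneg (x i)) (mem_univ i0)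
    linarith
  -- quadratic forms
  set QG : ℝ := ∑ i, ∑ j, adjMat G i j * (y i * y j) with hQG
  set QH : ℝ := ∑ i, ∑ j, adjMat H i j * (y i * y j) with hQH
  set T : ℝ := ∑ i, ∑ j, adjMat G i j * (y i - y j) ^ 2 with hT
  have hTnn : 0 ≤ T := by
    apply Finset.sum_nonneg; intro i _
    apply Finset.sum_nonneg; intro j _
    have : (0:ℝ) ≤ adjMat G i j := by simp [adjMat]; split <;> norm_num
    positivity
  -- μH * S ≤ QH
  have hQHge : μH * S ≤ QH := by
    have h1 : ∑ i, ∑ j, adjMat H i j * (x i * x j) = μH * S := by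
      have : ∀ i, ∑ j, adjMat H i j * x j = μH * x i := by
        intro i
        have := congrFun hxe i
        simpa [Matrix.mulVec, dotProduct] using this
      calc ∑ i, ∑ j, adjMat H i j * (x i * x j)
          = ∑ i, x i * ∑ j, adjMat H i j * x j := by
            congr 1; funext i; rw [Finset.mul_sum]; congr 1; funext j; ring
        _ = ∑ i, x i * (μH * x i) := by
            congr 1; funext i; rw [this i]
        _ = μH * S := by rw [hS, Finset.mul_sum]; congr 1; funext i; ring
    rw [← h1, hQH]
    apply Finset.sum_le_sum; intro i _
    apply Finset.sum_le_sum; intro j _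
    have hA : (0:ℝ) ≤ adjMat H i j := by simp [adjMat]; split <;> norm_num
    have : x i * x j ≤ y i * y j := by
      calc x i * x j ≤ |x i * x j| := le_abs_self _
        _ = y i * y j := abs_mul _ _
    exact mul_le_mul_of_nonneg_left this hA
  -- column sums
  have hcol : ∀ j : Fin n, ∑ i, adjMat G i j = (r:ℝ) := by
    intro j
    have hsymm : ∀ i, adjMat G i j = adjMat G j i := by
      intro i; simp [adjMat, SimpleGraph.adj_comm]
    rw [Finset.sum_congr rfl (fun i _ => hsymm i)]
    exact hrow j
  -- T identity
  have e1 : ∑ i, ∑ j, adjMat G i j * y i ^ 2 = (r:ℝ) * S := by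
    calc ∑ i, ∑ j, adjMat G i j * y i ^ 2
        = ∑ i, (∑ j, adjMat G i j) * y i ^ 2 := by
          apply Finset.sum_congr rfl; intro i _; rw [Finset.sum_mul]
      _ = ∑ i, (r:ℝ) * y i ^ 2 := by
          apply Finset.sum_congr rfl; intro i _; rw [hrow i]
      _ = (r:ℝ) * S := by rw [hSy, Finset.mul_sum]
  have e2 : ∑ i, ∑ j, adjMat G i j * y j ^ 2 = (r:ℝ) * S := by
    rw [Finset.sum_comm]
    calc ∑ j, ∑ i, adjMat G i j * y j ^ 2
        = ∑ j, (∑ i, adjMat G i j) * y j ^ 2 := by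
          apply Finset.sum_congr rfl; intro j _; rw [Finset.sum_mul]
      _ = ∑ j, (r:ℝ) * y j ^ 2 := by
          apply Finset.sum_congr rfl; intro j _; rw [hcol j]
      _ = (r:ℝ) * S := by rw [hSy, Finset.mul_sum]
  have hTid : T = 2 * ((r:ℝ) * S) - 2 * QG := by
    calc T = ∑ i, ∑ j, (adjMat G i j * y i ^ 2 + adjMat G i j * y j ^ 2
            - 2 * (adjMat G i j * (y i * y j))) := by
          rw [hT]; apply Finset.sum_congr rfl; intro i _
          apply Finset.sum_congr rfl; intro j _; ring
      _ = (∑ i, ∑ j, adjMat G i j * y i ^ 2) + (∑ i, ∑ j, adjMat G i j * y j ^ 2)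
            - 2 * QG := by
          rw [hQG, Finset.mul_sum, ← Finset.sum_add_distrib, ← Finset.sum_sub_distrib]
          apply Finset.sum_congr rfl; intro i _
          rw [Finset.mul_sum, ← Finset.sum_add_distrib, ← Finset.sum_sub_distrib]
      _ = 2 * ((r:ℝ) * S) - 2 * QG := by rw [e1, e2]; ring
  -- QG - QH ≥ 2 y_a y_b
  have hQdiff : 2 * (y a * y b) ≤ QG - QH := by
    set f : Fin n × Fin n → ℝ :=
      fun e => (adjMat G e.1 e.2 - adjMat H e.1 e.2) * (y e.1 * y e.2) with hf
    have hfnn : ∀ e, 0 ≤ f e := by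
      intro e
      have h1 : adjMat H e.1 e.2 ≤ adjMat G e.1 e.2 := by
        simp only [adjMat, Matrix.of_apply]
        by_cases h : H.Adj e.1 e.2
        · simp [h, hHG h]
        · simp [h]; split <;> norm_num
      have h2 : (0:ℝ) ≤ y e.1 * y e.2 := mul_nonneg (hy0 _) (hy0 _)
      exact mul_nonneg (by linarith) h2
    have hQf : QG - QH = ∑ e ∈ univ ×ˢ univ, f e := by
      rw [hQG, hQH, Finset.sum_product, ← Finset.sum_sub_distrib]
      apply Finset.sum_congr rfl; intro i _
      rw [← Finset.sum_sub_distrib]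
      apply Finset.sum_congr rfl; intro j _
      simp only [hf]; ring
    have hpairne : ((a, b) : Fin n × Fin n) ≠ (b, a) := by
      simp [Prod.ext_iff]; intro h; exact absurd h habne
    have hsub : ({((a, b) : Fin n × Fin n), (b, a)} : Finset (Fin n × Fin n)) ⊆ univ ×ˢ univ := by
      intro e _; simp [Finset.mem_product]
    have hsumpair : ∑ e ∈ ({((a, b) : Fin n × Fin n), (b, a)} : Finset (Fin n × Fin n)), f e
        = 2 * (y a * y b) := by
      rw [Finset.sum_pair hpairne]
      simp only [hf]
      simp only [adjMat, Matrix.of_apply]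
      rw [if_pos hab, if_neg hnab, if_pos hba, if_neg hnba]
      ring
    rw [hQf, ← hsumpair]
    exact Finset.sum_le_sum_of_subset_of_nonneg hsub (fun e _ _ => hfnn e)
  -- key inequality
  have key : T / 2 + 2 * (y a * y b) ≤ ((r:ℝ) - μH) * S := by nlinarith [hQHge, hTid, hQdiff]
  -- walk bound
  have hwalkbd : ∀ w c : Fin n, 2 * (y w - y c) ^ 2 ≤ (D:ℝ) * T := by
    intro w c
    obtain ⟨p, hp, hlen⟩ := hG.exists_path_of_dist w c
    have hlenD : p.length ≤ D := by rw [hlen]; exact hD1 w c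
    set k := p.length with hk
    set g : ℕ → ℝ := fun i => y (p.getVert i) - y (p.getVert (i + 1)) with hg
    have tele : ∑ i ∈ Finset.range k, g i = y w - y c := by
      have := Finset.sum_range_sub' (fun i => y (p.getVert i)) k
      simpa [hg, p.getVert_zero, p.getVert_length, hk] using this
    have hgsq : (0:ℝ) ≤ ∑ i ∈ Finset.range k, g i ^ 2 :=
      Finset.sum_nonneg fun i _ => sq_nonneg _
    have cs : (y w - y c) ^ 2 ≤ (k:ℝ) * ∑ i ∈ Finset.range k, g i ^ 2 := by
      have hcs := Finset.sum_mul_sq_le_sq_mul_sq (Finset.range k) (fun _ => (1:ℝ)) g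
      simp only [one_mul, one_pow] at hcs
      rw [← tele]
      calc (∑ i ∈ Finset.range k, g i) ^ 2
          ≤ (∑ _i ∈ Finset.range k, (1:ℝ)) * ∑ i ∈ Finset.range k, g i ^ 2 := hcs
        _ = (k:ℝ) * ∑ i ∈ Finset.range k, g i ^ 2 := by simp
    have h2 : 2 * ∑ i ∈ Finset.range k, g i ^ 2 ≤ T := by
      set F : Fin n × Fin n → ℝ := fun e => adjMat G e.1 e.2 * (y e.1 - y e.2) ^ 2 with hF
      have hFnn : ∀ e, 0 ≤ F e := by
        intro e
        have hA : (0:ℝ) ≤ adjMat G e.1 e.2 := by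
          simp only [adjMat, Matrix.of_apply]; split <;> norm_num
        exact mul_nonneg hA (sq_nonneg _)
      have hTF : T = ∑ e ∈ univ ×ˢ univ, F e := by
        rw [hT, Finset.sum_product]
      set ι1 : ℕ → Fin n × Fin n := fun i => (p.getVert i, p.getVert (i + 1)) with hι1
      set ι2 : ℕ → Fin n × Fin n := fun i => (p.getVert (i + 1), p.getVert i) with hι2
      have hinj1 : ∀ i ∈ Finset.range k, ∀ j ∈ Finset.range k, ι1 i = ι1 j → i = j := by
        intro i hi j hj hij
        rw [Finset.mem_range] at hi hj
        exact aux_getVert_inj hp (by omega) (by omega) (congrArg Prod.fst hij)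
      have hinj2 : ∀ i ∈ Finset.range k, ∀ j ∈ Finset.range k, ι2 i = ι2 j → i = j := by
        intro i hi j hj hij
        rw [Finset.mem_range] at hi hj
        exact aux_getVert_inj hp (by omega) (by omega) (congrArg Prod.snd hij)
      have hdisj : Disjoint ((Finset.range k).image ι1) ((Finset.range k).image ι2) := by
        rw [Finset.disjoint_left]
        rintro e he1 he2
        rw [Finset.mem_image] at he1 he2
        obtain ⟨i, hi, rfl⟩ := he1
        obtain ⟨j, hj, hji⟩ := he2
        rw [Finset.mem_range] at hi hj
        have h1 := congrArg Prod.fst hji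
        have h2 := congrArg Prod.snd hji
        simp only [hι1, hι2] at h1 h2
        have e1 := aux_getVert_inj hp (by omega) (by omega) h1
        have e2 := aux_getVert_inj hp (by omega) (by omega) h2
        omega
      have hsub : ((Finset.range k).image ι1 ∪ (Finset.range k).image ι2) ⊆ univ ×ˢ univ := by
        intro e _; simp [Finset.mem_product]
      have hFι1 : ∀ i ∈ Finset.range k, F (ι1 i) = g i ^ 2 := by
        intro i hi
        have hadj := p.adj_getVert_succ (Finset.mem_range.mp hi)
        simp only [hF, hι1, hg, adjMat, Matrix.of_apply]
        rw [if_pos hadj]; ring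
      have hFι2 : ∀ i ∈ Finset.range k, F (ι2 i) = g i ^ 2 := by
        intro i hi
        have hadj := (p.adj_getVert_succ (Finset.mem_range.mp hi)).symm
        simp only [hF, hι2, hg, adjMat, Matrix.of_apply]
        rw [if_pos hadj]; ring
      calc 2 * ∑ i ∈ Finset.range k, g i ^ 2
          = ∑ e ∈ (Finset.range k).image ι1, F e + ∑ e ∈ (Finset.range k).image ι2, F e := by
            rw [Finset.sum_image hinj1, Finset.sum_image hinj2,
              Finset.sum_congr rfl hFι1, Finset.sum_congr rfl hFι2]
            ring
        _ = ∑ e ∈ ((Finset.range k).image ι1 ∪ (Finset.range k).image ι2), F e :=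
            (Finset.sum_union hdisj).symm
        _ ≤ ∑ e ∈ univ ×ˢ univ, F e :=
            Finset.sum_le_sum_of_subset_of_nonneg hsub (fun e _ _ => hFnn e)
        _ = T := hTF.symm
    have hk0 : (0:ℝ) ≤ (k:ℝ) := Nat.cast_nonneg _
    have hkD : (k:ℝ) ≤ (D:ℝ) := by exact_mod_cast hlenD
    have s1 : (k:ℝ) * (2 * ∑ i ∈ Finset.range k, g i ^ 2) ≤ (k:ℝ) * T :=
      mul_le_mul_of_nonneg_left h2 hk0
    have s2 : (k:ℝ) * T ≤ (D:ℝ) * T := mul_le_mul_of_nonneg_right hkD hTnn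
    nlinarith [cs, s1, s2]
  -- argmax vertex
  obtain ⟨w, -, hw⟩ := Finset.exists_max_image (univ : Finset (Fin n)) y ⟨a, mem_univ a⟩
  have hwmax : ∀ i : Fin n, y i ≤ y w := fun i => hw i (mem_univ i)
  set m : ℝ := y w with hm
  have hm0 : 0 ≤ m := hy0 w
  have hm2 : S ≤ (n:ℝ) * m ^ 2 := by
    rw [hSy]
    calc ∑ i, y i ^ 2 ≤ ∑ _i : Fin n, m ^ 2 :=
          Finset.sum_le_sum fun i _ => pow_le_pow_left₀ (hy0 i) (hwmax i) 2
      _ = (n:ℝ) * m ^ 2 := by simp [Finset.card_univ, mul_comm]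
  -- β
  set β : ℝ := Real.sqrt ((D:ℝ) * T / 2) with hβ
  have hβnn : 0 ≤ β := Real.sqrt_nonneg _
  have hβ2 : β ^ 2 = (D:ℝ) * T / 2 := Real.sq_sqrt (div_nonneg (mul_nonneg (Nat.cast_nonneg D) hTnn) (by norm_num))
  have hya : y w - y a ≤ β := by nlinarith [hwalkbd w a, hβ2, hβnn, sq_nonneg (y w - y a - β)]
  have hyb : y w - y b ≤ β := by nlinarith [hwalkbd w b, hβ2, hβnn, sq_nonneg (y w - y b - β)]
  have hfinal : 2 / ((n:ℝ) * (2 * (D:ℝ) + 1)) ≤ (r:ℝ) - μH ∨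
      1 / ((n:ℝ) * (D:ℝ)) ≤ (r:ℝ) - μH := by
    by_cases hcase : β < m
    · left
      have hya' : m - β ≤ y a := by linarith
      have hyb' : m - β ≤ y b := by linarith
      have hmb0 : (0:ℝ) ≤ m - β := by linarith
      have hprod : (m - β) ^ 2 ≤ y a * y b := by
        calc (m - β) ^ 2 = (m - β) * (m - β) := sq (m - β) ▸ by ring
          _ ≤ y a * y b := mul_le_mul hya' hyb' hmb0 (hy0 a)
      set P : ℝ := ((r:ℝ) - μH) * S with hP
      have f1 : (D:ℝ) * (T / 2 + 2 * (y a * y b)) ≤ (D:ℝ) * P :=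
        mul_le_mul_of_nonneg_left key (le_of_lt hDpos)
      have f2 : 2 * β ^ 2 = (D:ℝ) * T := by rw [hβ2]; ring
      have f3 : (2 * (D:ℝ)) * ((m - β) ^ 2) ≤ (2 * (D:ℝ)) * (y a * y b) :=
        mul_le_mul_of_nonneg_left hprod (by positivity)
      have f5 : β ^ 2 + 2 * (D:ℝ) * (m - β) ^ 2 ≤ (D:ℝ) * P := by nlinarith [f1, f2, f3]
      have f6 : (2 * (D:ℝ) + 1) * (β ^ 2 + 2 * (D:ℝ) * (m - β) ^ 2)
          ≤ (2 * (D:ℝ) + 1) * ((D:ℝ) * P) :=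
        mul_le_mul_of_nonneg_left f5 (by positivity)
      have f4 : (0:ℝ) ≤ ((2 * (D:ℝ) + 1) * β - 2 * (D:ℝ) * m) ^ 2 := sq_nonneg _
      have G1 : 2 * (D:ℝ) * m ^ 2 ≤ (2 * (D:ℝ) + 1) * ((D:ℝ) * P) := by nlinarith [f6, f4]
      have f8 : 2 * (D:ℝ) * S ≤ 2 * (D:ℝ) * ((n:ℝ) * m ^ 2) :=
        mul_le_mul_of_nonneg_left hm2 (by positivity)
      have f9 : (n:ℝ) * (2 * (D:ℝ) * m ^ 2) ≤ (n:ℝ) * ((2 * (D:ℝ) + 1) * ((D:ℝ) * P)) :=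
        mul_le_mul_of_nonneg_left G1 (by positivity)
      have g2 : 2 * ((D:ℝ) * S) ≤ (n:ℝ) * ((2 * (D:ℝ) + 1) * ((D:ℝ) * P)) := by
        nlinarith [f8, f9]
      rw [div_le_iff₀ (by positivity)]
      by_contra hcon
      push_neg at hcon
      have hDS : (0:ℝ) < (D:ℝ) * S := mul_pos hDpos hSpos
      have hx : (((r:ℝ) - μH) * ((n:ℝ) * (2 * (D:ℝ) + 1))) * ((D:ℝ) * S)
          < 2 * ((D:ℝ) * S) := mul_lt_mul_of_pos_right hcon hDS
      have heq : (n:ℝ) * ((2 * (D:ℝ) + 1) * ((D:ℝ) * P))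
          = (((r:ℝ) - μH) * ((n:ℝ) * (2 * (D:ℝ) + 1))) * ((D:ℝ) * S) := by
        rw [hP]; ring
      linarith [g2, hx, heq.le, heq.ge]
    · right
      push_neg at hcase
      have hm2β : m ^ 2 ≤ β ^ 2 := pow_le_pow_left₀ hm0 hcase 2
      have hyab : (0:ℝ) ≤ y a * y b := mul_nonneg (hy0 a) (hy0 b)
      set P : ℝ := ((r:ℝ) - μH) * S with hP
      have f1 : (D:ℝ) * (T / 2 + 2 * (y a * y b)) ≤ (D:ℝ) * P :=
        mul_le_mul_of_nonneg_left key (le_of_lt hDpos)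
      have f2 : 2 * β ^ 2 = (D:ℝ) * T := by rw [hβ2]; ring
      have f3 : (2*(D:ℝ)) * (y a * y b) ≥ 0 := by positivity
      have G1 : m ^ 2 ≤ (D:ℝ) * P := by nlinarith [f1, f2, hm2β]
      have f9 : (n:ℝ) * (m ^ 2) ≥ S := hm2.trans_eq rfl
      have g2 : S ≤ (n:ℝ) * ((D:ℝ) * P) := by nlinarith [hm2, G1, hnpos]
      rw [div_le_iff₀ (by positivity)]
      by_contra hcon
      push_neg at hcon
      have hDS : (0:ℝ) < (D:ℝ) * S := mul_pos hDpos hSpos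
      have hx : (((r:ℝ) - μH) * ((n:ℝ) * (D:ℝ))) * ((D:ℝ) * S)
          < 1 * ((D:ℝ) * S) := mul_lt_mul_of_pos_right hcon hDS
      have heq : (D:ℝ) * ((n:ℝ) * ((D:ℝ) * P))
          = (((r:ℝ) - μH) * ((n:ℝ) * (D:ℝ))) * ((D:ℝ) * S) := by
        rw [hP]; ring
      have g3 : (D:ℝ) * S ≤ (D:ℝ) * ((n:ℝ) * ((D:ℝ) * P)) :=
        mul_le_mul_of_nonneg_left g2 (le_of_lt hDpos)
      linarith [g3, hx, heq.le, heq.ge]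
  -- conclude
  have hcmp1 : 1 / ((n:ℝ) * ((D:ℝ) + 1)) < 2 / ((n:ℝ) * (2 * (D:ℝ) + 1)) := by
    rw [div_lt_div_iff₀ (by positivity) (by positivity)]
    nlinarith [hnpos]
  have hcmp2 : 1 / ((n:ℝ) * ((D:ℝ) + 1)) < 1 / ((n:ℝ) * (D:ℝ)) := by
    rw [div_lt_div_iff₀ (by positivity) (by positivity)]
    nlinarith [hnpos, hDpos]
  rcases hfinal with hf | hf
  · have : 1 / ((n:ℝ) * ((D:ℝ) + 1)) < (r:ℝ) - μH := lt_of_lt_of_le hcmp1 hf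
    linarith [hμGr]
  · have : 1 / ((n:ℝ) * ((D:ℝ) + 1)) < (r:ℝ) - μH := lt_of_lt_of_le hcmp2 hf
    linarith [hμGr]
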